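/- Let H be a complex Hilbert space, let q and c be real numbers with 0 < q < 1 and c ≥ 0. Suppose v is a unitary operator on H, Y is a bounded self-adjoint operator on H with ker Y = {0} and Yv = q²vY, and P is a bounded positive self-adjoint operator on H with P = q²vPv* + (1 − q²)(Y² + c·1). Then H = {0} (i.e., every vector of H is zero). -/

import Mathlib

open ContinuousLinearMap

/-- Let `0 < q < 1`, `c ≥ 0`.  Suppose `v` is unitary (`v*v = v v* = 1`), `Y` is bounded
self-adjoint with trivial kernel and `Y v = q² v Y`, and `P` is a bounded positive
self-adjoint operator with `P = q² v P v* + (1 − q²)(Y² + c·1)`.  Then `H = {0}`. -/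
theorem unitary_part_trivial
    {H : Type*} [NormedAddCommGroup H] [InnerProductSpace ℂ H] [CompleteSpace H]
    (q c : ℝ) (hq0 : 0 < q) (hq1 : q < 1) (hc : 0 ≤ c)
    (v Y P : H →L[ℂ] H)
    (hv : adjoint v ∘L v = 1) (hv' : v ∘L adjoint v = 1)
    (hY : IsSelfAdjoint Y) (hkerY : LinearMap.ker (Y : H →ₗ[ℂ] H) = ⊥)
    (hYv : Y ∘L v = ((q : ℂ) ^ 2) • (v ∘L Y))
    (hPpos : P.IsPositive)
    (hP : P = ((q : ℂ) ^ 2) • (v ∘L P ∘L adjoint v)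
      + ((1 : ℂ) - (q : ℂ) ^ 2) • (Y ∘L Y + (c : ℂ) • (1 : H →L[ℂ] H))) :
    ∀ ξ : H, ξ = 0 := by
  -- `v` is isometric
  have hnv : ∀ η : H, ‖v η‖ = ‖η‖ := by
    intro η
    have h : (inner ℂ (v η) (v η) : ℂ) = inner ℂ η η := by
      rw [← adjoint_inner_left]
      rw [show adjoint v (v η) = (adjoint v ∘L v) η from rfl, hv, ContinuousLinearMap.one_apply]
    rw [inner_self_eq_norm_sq_to_K, inner_self_eq_norm_sq_to_K] at h
    have h2 : (‖v η‖ : ℝ) ^ 2 = ‖η‖ ^ 2 := by exact_mod_cast h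
    nlinarith [norm_nonneg (v η), norm_nonneg η]
  -- `‖Y ξ‖ = q² ‖Y (v* ξ)‖`
  have hnY : ∀ ξ : H, ‖Y ξ‖ = q ^ 2 * ‖Y (adjoint v ξ)‖ := by
    intro ξ
    have h1 : Y ξ = ((q : ℂ) ^ 2) • v (Y (adjoint v ξ)) := by
      have h := congrArg (fun (T : H →L[ℂ] H) => T (adjoint v ξ)) hYv
      simp only [comp_apply, smul_apply] at h
      rw [show v (adjoint v ξ) = (v ∘L adjoint v) ξ from rfl, hv', ContinuousLinearMap.one_apply] at h
      exact h
    rw [h1, norm_smul, hnv]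
    norm_num [abs_of_nonneg (le_of_lt hq0)]
  -- key identity from `hP`
  have hkey : ∀ ξ : H, Complex.re (inner ℂ (P ξ) ξ) =
      q ^ 2 * Complex.re (inner ℂ (P (adjoint v ξ)) (adjoint v ξ))
        + (1 - q ^ 2) * (‖Y ξ‖ ^ 2 + c * ‖ξ‖ ^ 2) := by
    intro ξ
    have hY2 : (inner ℂ (Y (Y ξ)) ξ : ℂ) = ((‖Y ξ‖ ^ 2 : ℝ) : ℂ) := by
      rw [← adjoint_inner_right, hY.adjoint_eq]
      simp [inner_self_eq_norm_sq_to_K]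
    have hvP : (inner ℂ (v (P (adjoint v ξ))) ξ : ℂ)
        = inner ℂ (P (adjoint v ξ)) (adjoint v ξ) := by
      rw [← adjoint_inner_right]
    conv_lhs => rw [hP]
    simp only [add_apply, smul_apply, comp_apply, one_apply, inner_add_left, inner_smul_left,
      hY2, hvP, inner_self_eq_norm_sq_to_K]
    simp [Complex.add_re, Complex.mul_re, ← Complex.ofReal_pow]
  -- positivity
  have hPnn : ∀ ξ : H, 0 ≤ Complex.re (inner ℂ (P ξ) ξ) := by
    intro ξ
    simpa [ContinuousLinearMap.reApplyInnerSelf] using hPpos.2 ξ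
  have hq2 : 0 < q ^ 2 := by positivity
  have hq2' : q ^ 2 < 1 := by nlinarith
  -- the main induction
  have hind : ∀ n : ℕ, ∀ ξ : H,
      (n : ℝ) * ((1 - q ^ 2) * ‖Y ξ‖ ^ 2) ≤ Complex.re (inner ℂ (P ξ) ξ) := by
    intro n
    induction n with
    | zero => intro ξ; simpa using hPnn ξ
    | succ n ih =>
      intro ξ
      have h1 := ih (adjoint v ξ)
      have h2 := hkey ξ
      have h3 := hnY ξ
      have h4 : ‖Y ξ‖ ^ 2 = q ^ 4 * ‖Y (adjoint v ξ)‖ ^ 2 := by rw [h3]; ring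
      have h5 : ‖Y ξ‖ ^ 2 ≤ q ^ 2 * ‖Y (adjoint v ξ)‖ ^ 2 := by
        rw [h4]
        nlinarith [sq_nonneg (‖Y (adjoint v ξ)‖), sq_nonneg q]
      have h6 : 0 ≤ c * ‖ξ‖ ^ 2 := by positivity
      have hq2le : (0:ℝ) ≤ 1 - q ^ 2 := by linarith
      have hcoef : (0:ℝ) ≤ (n : ℝ) * (1 - q ^ 2) := by positivity
      have h7 := mul_le_mul_of_nonneg_left h5 hcoef
      have h8 := mul_le_mul_of_nonneg_left h1 (le_of_lt hq2)
      have h9 : 0 ≤ (1 - q ^ 2) * (c * ‖ξ‖ ^ 2) := mul_nonneg hq2le h6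
      push_cast
      nlinarith [h7, h8, h9]
  -- conclude
  intro ξ
  have hYξ : Y ξ = 0 := by
    by_contra hne
    have hpos : 0 < (1 - q ^ 2) * ‖Y ξ‖ ^ 2 :=
      mul_pos (by linarith) (pow_pos (norm_pos_iff.mpr hne) 2)
    obtain ⟨n, hn⟩ := exists_nat_gt (Complex.re (inner ℂ (P ξ) ξ) / ((1 - q ^ 2) * ‖Y ξ‖ ^ 2))
    have := hind n ξ
    rw [div_lt_iff₀ hpos] at hn
    linarith
  have : ξ ∈ LinearMap.ker (Y : H →ₗ[ℂ] H) := hYξ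
  rwa [hkerY, Submodule.mem_bot] at this
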